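/- Let U be a unitary on a bipartite finite-dimensional Hilbert space H_P ⊗ H_Q such that for every t ≥ 0, U^t maps product operators to product operators in the sense that Ad_U^t(End(H_P) ⊗ 1) ⊆ End(H_P) ⊗ 1 and Ad_U^t(1 ⊗ End(H_Q)) ⊆ 1 ⊗ End(H_Q). Then U = V ⊗ W for some unitaries V on H_P and W on H_Q, up to a global phase. -/

import Mathlib

open Kronecker Matrix

private lemma kron_conjT {p q p' q' : Type*} (A : Matrix p p' ℂ) (B : Matrix q q' ℂ) :
    (A ⊗ₖ B)ᴴ = Aᴴ ⊗ₖ Bᴴ := by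
  ext ⟨i, a⟩ ⟨j, b⟩
  simp [conjTranspose_apply, kroneckerMap_apply, mul_comm]

private lemma kron_one_inj {p q : Type*} [Fintype q] [Nonempty q] [DecidableEq q]
    {m m' : Matrix p p ℂ} (h : m ⊗ₖ (1 : Matrix q q ℂ) = m' ⊗ₖ (1 : Matrix q q ℂ)) :
    m = m' := by
  obtain ⟨a⟩ := ‹Nonempty q›
  ext i j
  have := congrFun (congrFun h (i, a)) (j, a)
  simpa [kroneckerMap_apply] using this

private lemma one_kron_inj {p q : Type*} [Fintype p] [Nonempty p] [DecidableEq p]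
    {n n' : Matrix q q ℂ} (h : (1 : Matrix p p ℂ) ⊗ₖ n = (1 : Matrix p p ℂ) ⊗ₖ n') :
    n = n' := by
  obtain ⟨a⟩ := ‹Nonempty p›
  ext i j
  have := congrFun (congrFun h (a, i)) (a, j)
  simpa [kroneckerMap_apply] using this

/-- every star-preserving injective algebra endomorphism of a matrix algebra is
conjugation by a unitary -/
private lemma exists_unitary_conj {n : Type*} [Fintype n] [DecidableEq n] [Nonempty n]
    (Φ : Matrix n n ℂ →ₗ[ℂ] Matrix n n ℂ)
    (hmul : ∀ a b, Φ (a * b) = Φ a * Φ b)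
    (hinj : ∀ a, Φ a = 0 → a = 0)
    (hstar : ∀ a, Φ aᴴ = (Φ a)ᴴ) :
    ∃ V : Matrix n n ℂ, V ∈ Matrix.unitaryGroup n ℂ ∧ ∀ a, Φ a = V * a * star V := by
  classical
  set F : n → n → Matrix n n ℂ := fun i j => Φ (Matrix.single i j 1) with hFdef
  have hF : ∀ i j k l, F i j * F k l = if j = k then F i l else 0 := by
    intro i j k l
    rw [← hmul]
    by_cases h : j = k
    · subst h; simp [F]
    · have h0 : Matrix.single i j (1:ℂ) * Matrix.single k l (1:ℂ) = 0 := by simp [h]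
      rw [if_neg h, h0, map_zero]
  obtain ⟨i0⟩ := ‹Nonempty n›
  have hF0 : F i0 i0 ≠ 0 := by
    intro h
    have := hinj _ h
    have := congrFun (congrFun this i0) i0
    simp [Matrix.single] at this
  -- find a vector with F i0 i0 *ᵥ w ≠ 0
  obtain ⟨x1, y1, hxy⟩ : ∃ x y, F i0 i0 x y ≠ 0 := by
    by_contra h
    push_neg at h
    exact hF0 (by ext x y; exact h x y)
  set w : n → ℂ := Pi.single y1 1 with hw
  set v : n → ℂ := F i0 i0 *ᵥ w with hv
  have hvx : v x1 ≠ 0 := by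
    have : v x1 = F i0 i0 x1 y1 := by
      simp [hv, hw, mulVec, dotProduct, Pi.single_apply]
    rw [this]; exact hxy
  have hvfix : F i0 i0 *ᵥ v = v := by
    rw [hv, mulVec_mulVec, hF]
    simp
  set V : Matrix n n ℂ := Matrix.of (fun x k => (F k i0 *ᵥ v) x) with hVdef
  have colV : ∀ (A : Matrix n n ℂ) (x k : n), (A * V) x k = ((A * F k i0) *ᵥ v) x := by
    intro A x k
    rw [← mulVec_mulVec]
    simp [mul_apply, mulVec, dotProduct, V]
  have key1 : ∀ i j, F i j * V = V * Matrix.single i j 1 := by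
    intro i j
    ext x k
    rw [colV, hF]
    by_cases h : j = k
    · subst h
      simp [V]
    · rw [if_neg h]
      simp [Ne.symm h]
  have keyAll : ∀ a : Matrix n n ℂ, Φ a * V = V * a := by
    intro a
    have ha : a = ∑ i : n, ∑ j : n, a i j • Matrix.single i j 1 := by
      conv_lhs => rw [matrix_eq_sum_single a]
      refine Finset.sum_congr rfl fun i _ => Finset.sum_congr rfl fun j _ => ?_
      rw [smul_single, smul_eq_mul, mul_one]
    rw [ha]
    simp only [map_sum, LinearMap.map_smul, Finset.sum_mul, Matrix.mul_sum,
      smul_mul_assoc, Matrix.mul_smul]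
    refine Finset.sum_congr rfl fun i _ => Finset.sum_congr rfl fun j _ => ?_
    rw [key1]
  -- V is invertible
  have hVinj : ∀ x : n → ℂ, V *ᵥ x = 0 → x = 0 := by
    intro x hx
    funext i
    have h1 : F i0 i *ᵥ (V *ᵥ x) = 0 := by rw [hx, mulVec_zero]
    rw [mulVec_mulVec] at h1
    have h2 : F i0 i * V = Matrix.of (fun x' k => if i = k then v x' else 0) := by
      ext x' k
      rw [colV, hF]
      by_cases h : i = k
      · subst h
        simpa using congrFun hvfix x'
      · simp [h]
    rw [h2] at h1
    have h3 := congrFun h1 x1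
    simp only [mulVec, dotProduct, Matrix.of_apply, ite_mul, zero_mul] at h3
    rw [Finset.sum_ite_eq (Finset.univ : Finset n) i (fun k => v x1 * x k)] at h3
    simp only [Finset.mem_univ, if_true, Pi.zero_apply] at h3
    rcases mul_eq_zero.mp h3 with h | h
    · exact absurd h hvx
    · simpa using h
  have hVdetne : V.det ≠ 0 := by
    intro h
    obtain ⟨x, hx0, hx⟩ := (Matrix.exists_mulVec_eq_zero_iff).mpr h
    exact hx0 (hVinj x hx)
  have hVinv : V⁻¹ * V = 1 := Matrix.nonsing_inv_mul V (isUnit_iff_ne_zero.mpr hVdetne)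
  have hVinv' : V * V⁻¹ = 1 := Matrix.mul_nonsing_inv V (isUnit_iff_ne_zero.mpr hVdetne)
  have hconj : ∀ a, Φ a = V * a * V⁻¹ := by
    intro a
    calc Φ a = Φ a * (V * V⁻¹) := by rw [hVinv', mul_one]
    _ = (Φ a * V) * V⁻¹ := by rw [← mul_assoc]
    _ = V * a * V⁻¹ := by rw [keyAll]
  -- Vᴴ * V commutes with everything
  have hA : ∀ b : Matrix n n ℂ, (Vᴴ * V) * b = b * (Vᴴ * V) := by
    intro b
    have hs := hstar bᴴ
    rw [conjTranspose_conjTranspose, hconj, hconj] at hs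
    -- hs : V * b * V⁻¹ = (V * bᴴ * V⁻¹)ᴴ
    have hs' : V * b * V⁻¹ = V⁻¹ᴴ * (bᴴᴴ * Vᴴ) := by
      rw [hs, conjTranspose_mul, conjTranspose_mul]
    rw [conjTranspose_conjTranspose] at hs'
    have hVmm : Vᴴ * V⁻¹ᴴ = 1 := by
      rw [← conjTranspose_mul, hVinv, conjTranspose_one]
    have h1 := congrArg (fun X => Vᴴ * X * V) hs'
    simp only [mul_assoc] at h1
    rw [hVinv, mul_one] at h1
    rw [← mul_assoc Vᴴ V⁻¹ᴴ, hVmm, one_mul] at h1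
    rw [mul_assoc]
    exact h1
  obtain ⟨r, hr⟩ := Matrix.mem_range_scalar_of_commute_single
    (M := Vᴴ * V) (fun i j _ => (hA _).symm)
  have hrval : Vᴴ * V = r • (1 : Matrix n n ℂ) := by
    rw [← hr]
    ext i j
    rcases eq_or_ne i j with rfl | h
    · simp [Matrix.scalar_apply]
    · simp [Matrix.scalar_apply, Matrix.one_apply_ne h, Matrix.diagonal_apply_ne _ h]
  -- r is a positive real
  have hVcol : ∀ x, V x i0 = v x := by
    intro x
    simp only [hVdef, Matrix.of_apply]
    rw [hvfix]
  have hrre : r = ∑ x : n, (Complex.normSq (v x) : ℂ) := by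
    have h1 : (Vᴴ * V) i0 i0 = r := by rw [hrval]; simp
    rw [← h1, mul_apply]
    refine Finset.sum_congr rfl fun x _ => ?_
    rw [conjTranspose_apply, hVcol x]
    exact Complex.normSq_eq_conj_mul_self.symm
  set s : ℝ := ∑ x : n, Complex.normSq (v x) with hs
  have hrs : r = (s : ℂ) := by rw [hrre, hs]; push_cast; ring
  have hspos : 0 < s := by
    rw [hs]
    apply Finset.sum_pos' (fun x _ => Complex.normSq_nonneg _)
    exact ⟨x1, Finset.mem_univ _, Complex.normSq_pos.mpr hvx⟩
  set c0 : ℂ := (((Real.sqrt s)⁻¹ : ℝ) : ℂ) with hc0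
  have hc0c0 : c0 * c0 = ((s⁻¹ : ℝ) : ℂ) := by
    rw [hc0]
    push_cast
    rw [← mul_inv]
    norm_cast
    rw [Real.mul_self_sqrt hspos.le]
  set V' : Matrix n n ℂ := c0 • V with hV'
  have hV'u : V' ∈ Matrix.unitaryGroup n ℂ := by
    rw [Matrix.mem_unitaryGroup_iff']
    have : star V' = c0 • Vᴴ := by
      rw [hV']
      simp only [star_eq_conjTranspose, conjTranspose_smul]
      congr 1
      rw [hc0]
      simp [Complex.conj_ofReal]
    rw [this, hV', smul_mul_smul_comm, hrval, hc0c0, hrs, smul_smul]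
    norm_cast
    rw [inv_mul_cancel₀ hspos.ne']
    simp
  refine ⟨V', hV'u, fun a => ?_⟩
  have hVinvEq : V⁻¹ = ((s⁻¹ : ℝ) : ℂ) • Vᴴ := by
    apply Matrix.inv_eq_left_inv
    rw [smul_mul_assoc, hrval, hrs, smul_smul]
    norm_cast
    rw [inv_mul_cancel₀ hspos.ne']
    simp
  rw [hconj a, hVinvEq]
  have hstarV' : star V' = c0 • Vᴴ := by
    rw [hV']
    simp only [star_eq_conjTranspose, conjTranspose_smul]
    congr 1
    rw [hc0]
    simp [Complex.conj_ofReal]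
  rw [hstarV', hV']
  rw [smul_mul_assoc, mul_smul_comm, smul_mul_assoc, Matrix.mul_smul, smul_smul, hc0c0]

/-- a unitary U on a bipartite system H_P ⊗ H_Q whose conjugation
action preserves both local operator algebras (for all t ≥ 0,
Ad_U^t(End(H_P) ⊗ 1) ⊆ End(H_P) ⊗ 1 and Ad_U^t(1 ⊗ End(H_Q)) ⊆ 1 ⊗ End(H_Q))
is a tensor product U = c • (V ⊗ W) of local unitaries, up to a global phase c. -/
theorem local_algebra_preserving_unitary_is_product
    {p q : Type*} [Fintype p] [DecidableEq p] [Fintype q] [DecidableEq q]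
    (U : Matrix (p × q) (p × q) ℂ)
    (hU : U ∈ Matrix.unitaryGroup (p × q) ℂ)
    (hP : ∀ (t : ℕ) (m : Matrix p p ℂ),
      ∃ m' : Matrix p p ℂ,
        U ^ t * (m ⊗ₖ (1 : Matrix q q ℂ)) * (star U) ^ t = m' ⊗ₖ (1 : Matrix q q ℂ))
    (hQ : ∀ (t : ℕ) (n : Matrix q q ℂ),
      ∃ n' : Matrix q q ℂ,
        U ^ t * ((1 : Matrix p p ℂ) ⊗ₖ n) * (star U) ^ t = (1 : Matrix p p ℂ) ⊗ₖ n') :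
    ∃ (c : ℂ) (V : Matrix p p ℂ) (W : Matrix q q ℂ),
      ‖c‖ = 1 ∧ V ∈ Matrix.unitaryGroup p ℂ ∧ W ∈ Matrix.unitaryGroup q ℂ ∧
        U = c • (V ⊗ₖ W) := by
  classical
  rcases isEmpty_or_nonempty p with hp | hp
  · refine ⟨1, 1, 1, by simp, one_mem _, one_mem _, ?_⟩
    ext ⟨i, a⟩ ⟨j, b⟩
    exact (hp.false i).elim
  rcases isEmpty_or_nonempty q with hq | hq
  · refine ⟨1, 1, 1, by simp, one_mem _, one_mem _, ?_⟩
    ext ⟨i, a⟩ ⟨j, b⟩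
    exact (hq.false a).elim
  have hUU : star U * U = 1 := (Unitary.mem_iff.mp hU).1
  have hUU' : U * star U = 1 := (Unitary.mem_iff.mp hU).2
  -- define f : conjugation action on the P algebra
  have hP1 : ∀ m : Matrix p p ℂ, ∃ m', U * (m ⊗ₖ (1 : Matrix q q ℂ)) * star U
      = m' ⊗ₖ (1 : Matrix q q ℂ) := by
    intro m
    obtain ⟨m', hm'⟩ := hP 1 m
    rw [pow_one, pow_one] at hm'
    exact ⟨m', hm'⟩
  have hQ1 : ∀ n : Matrix q q ℂ, ∃ n', U * ((1 : Matrix p p ℂ) ⊗ₖ n) * star U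
      = (1 : Matrix p p ℂ) ⊗ₖ n' := by
    intro n
    obtain ⟨n', hn'⟩ := hQ 1 n
    rw [pow_one, pow_one] at hn'
    exact ⟨n', hn'⟩
  set f : Matrix p p ℂ → Matrix p p ℂ := fun m => Classical.choose (hP1 m) with hfdef
  have hf : ∀ m, U * (m ⊗ₖ (1 : Matrix q q ℂ)) * star U = f m ⊗ₖ 1 :=
    fun m => Classical.choose_spec (hP1 m)
  set g : Matrix q q ℂ → Matrix q q ℂ := fun n => Classical.choose (hQ1 n) with hgdef
  have hg : ∀ n, U * ((1 : Matrix p p ℂ) ⊗ₖ n) * star U = 1 ⊗ₖ g n :=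
    fun n => Classical.choose_spec (hQ1 n)
  have hsand : ∀ X Y : Matrix (p × q) (p × q) ℂ,
      U * (X * Y) * star U = (U * X * star U) * (U * Y * star U) := by
    intro X Y
    calc U * (X * Y) * star U
        = U * (X * ((star U * U) * (Y * star U))) := by
          rw [hUU, one_mul]; simp only [mul_assoc]
      _ = (U * X * star U) * (U * Y * star U) := by simp only [mul_assoc]
  have unconj : ∀ X : Matrix (p × q) (p × q) ℂ,
      star U * (U * X * star U) * U = X := by
    intro X
    simp only [← mul_assoc]
    rw [hUU, one_mul, mul_assoc, hUU, mul_one]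
  -- f is linear
  have hfadd : ∀ m m', f (m + m') = f m + f m' := by
    intro m m'
    apply kron_one_inj (q := q)
    calc f (m + m') ⊗ₖ (1 : Matrix q q ℂ)
        = U * ((m + m') ⊗ₖ 1) * star U := (hf _).symm
      _ = U * (m ⊗ₖ 1) * star U + U * (m' ⊗ₖ 1) * star U := by
          rw [Matrix.add_kronecker, Matrix.mul_add, Matrix.add_mul]
      _ = f m ⊗ₖ 1 + f m' ⊗ₖ 1 := by rw [hf, hf]
      _ = (f m + f m') ⊗ₖ 1 := (Matrix.add_kronecker _ _ _).symm
  have hfsmul : ∀ (c : ℂ) m, f (c • m) = c • f m := by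
    intro c m
    apply kron_one_inj (q := q)
    calc f (c • m) ⊗ₖ (1 : Matrix q q ℂ)
        = U * ((c • m) ⊗ₖ 1) * star U := (hf _).symm
      _ = c • (U * (m ⊗ₖ 1) * star U) := by
          rw [Matrix.smul_kronecker, Matrix.mul_smul, Matrix.smul_mul]
      _ = c • (f m ⊗ₖ 1) := by rw [hf]
      _ = (c • f m) ⊗ₖ 1 := (Matrix.smul_kronecker _ _ _).symm
  set Φ : Matrix p p ℂ →ₗ[ℂ] Matrix p p ℂ :=
    { toFun := f, map_add' := hfadd, map_smul' := hfsmul } with hΦ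
  have hfmul : ∀ a b, Φ (a * b) = Φ a * Φ b := by
    intro a b
    apply kron_one_inj (q := q)
    show f (a * b) ⊗ₖ _ = (f a * f b) ⊗ₖ _
    calc f (a * b) ⊗ₖ (1 : Matrix q q ℂ)
        = U * ((a * b) ⊗ₖ 1) * star U := (hf _).symm
      _ = U * ((a ⊗ₖ 1) * (b ⊗ₖ 1)) * star U := by
          rw [← Matrix.mul_kronecker_mul, mul_one]
      _ = (U * (a ⊗ₖ 1) * star U) * (U * (b ⊗ₖ 1) * star U) := hsand _ _
      _ = (f a ⊗ₖ 1) * (f b ⊗ₖ 1) := by rw [hf, hf]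
      _ = (f a * f b) ⊗ₖ 1 := by rw [← Matrix.mul_kronecker_mul, mul_one]
  have hfinj : ∀ a, Φ a = 0 → a = 0 := by
    intro a ha
    have h1 : U * (a ⊗ₖ (1 : Matrix q q ℂ)) * star U = 0 := by
      rw [hf]
      show f a ⊗ₖ _ = 0
      rw [show f a = Φ a from rfl, ha, Matrix.zero_kronecker]
    have h2 : a ⊗ₖ (1 : Matrix q q ℂ) = 0 := by
      rw [← unconj (a ⊗ₖ (1 : Matrix q q ℂ)), h1, mul_zero, zero_mul]
    apply kron_one_inj (q := q)
    rw [h2, Matrix.zero_kronecker]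
  have hfstar : ∀ a, Φ aᴴ = (Φ a)ᴴ := by
    intro a
    apply kron_one_inj (q := q)
    show f aᴴ ⊗ₖ _ = (f a)ᴴ ⊗ₖ _
    calc f aᴴ ⊗ₖ (1 : Matrix q q ℂ)
        = U * (aᴴ ⊗ₖ 1) * star U := (hf _).symm
      _ = U * (a ⊗ₖ (1 : Matrix q q ℂ))ᴴ * star U := by
          rw [kron_conjT, conjTranspose_one]
      _ = (U * (a ⊗ₖ 1) * star U)ᴴ := by
          simp only [conjTranspose_mul, star_eq_conjTranspose,
            conjTranspose_conjTranspose, mul_assoc]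
      _ = (f a ⊗ₖ (1 : Matrix q q ℂ))ᴴ := by rw [hf]
      _ = (f a)ᴴ ⊗ₖ 1 := by rw [kron_conjT, conjTranspose_one]
  obtain ⟨V, hVu, hV⟩ := exists_unitary_conj Φ hfmul hfinj hfstar
  -- same for g
  have hgadd : ∀ m m', g (m + m') = g m + g m' := by
    intro m m'
    apply one_kron_inj (p := p)
    calc (1 : Matrix p p ℂ) ⊗ₖ g (m + m')
        = U * (1 ⊗ₖ (m + m')) * star U := (hg _).symm
      _ = U * (1 ⊗ₖ m) * star U + U * (1 ⊗ₖ m') * star U := by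
          rw [Matrix.kronecker_add, Matrix.mul_add, Matrix.add_mul]
      _ = 1 ⊗ₖ g m + 1 ⊗ₖ g m' := by rw [hg, hg]
      _ = (1 : Matrix p p ℂ) ⊗ₖ (g m + g m') := (Matrix.kronecker_add _ _ _).symm
  have hgsmul : ∀ (c : ℂ) m, g (c • m) = c • g m := by
    intro c m
    apply one_kron_inj (p := p)
    calc (1 : Matrix p p ℂ) ⊗ₖ g (c • m)
        = U * (1 ⊗ₖ (c • m)) * star U := (hg _).symm
      _ = c • (U * (1 ⊗ₖ m) * star U) := by
          rw [Matrix.kronecker_smul, Matrix.mul_smul, Matrix.smul_mul]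
      _ = c • ((1 : Matrix p p ℂ) ⊗ₖ g m) := by rw [hg]
      _ = (1 : Matrix p p ℂ) ⊗ₖ (c • g m) := (Matrix.kronecker_smul _ _ _).symm
  set Ψ : Matrix q q ℂ →ₗ[ℂ] Matrix q q ℂ :=
    { toFun := g, map_add' := hgadd, map_smul' := hgsmul } with hΨ
  have hgmul : ∀ a b, Ψ (a * b) = Ψ a * Ψ b := by
    intro a b
    apply one_kron_inj (p := p)
    show _ ⊗ₖ g (a * b) = _ ⊗ₖ (g a * g b)
    calc (1 : Matrix p p ℂ) ⊗ₖ g (a * b)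
        = U * (1 ⊗ₖ (a * b)) * star U := (hg _).symm
      _ = U * ((1 ⊗ₖ a) * (1 ⊗ₖ b)) * star U := by
          rw [← Matrix.mul_kronecker_mul, mul_one]
      _ = (U * (1 ⊗ₖ a) * star U) * (U * (1 ⊗ₖ b) * star U) := hsand _ _
      _ = (1 ⊗ₖ g a) * (1 ⊗ₖ g b) := by rw [hg, hg]
      _ = (1 : Matrix p p ℂ) ⊗ₖ (g a * g b) := by
          rw [← Matrix.mul_kronecker_mul, mul_one]
  have hginj : ∀ a, Ψ a = 0 → a = 0 := by
    intro a ha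
    have h1 : U * ((1 : Matrix p p ℂ) ⊗ₖ a) * star U = 0 := by
      rw [hg]
      show _ ⊗ₖ g a = 0
      rw [show g a = Ψ a from rfl, ha, Matrix.kronecker_zero]
    have h2 : (1 : Matrix p p ℂ) ⊗ₖ a = 0 := by
      rw [← unconj ((1 : Matrix p p ℂ) ⊗ₖ a), h1, mul_zero, zero_mul]
    apply one_kron_inj (p := p)
    rw [h2, Matrix.kronecker_zero]
  have hgstar : ∀ a, Ψ aᴴ = (Ψ a)ᴴ := by
    intro a
    apply one_kron_inj (p := p)
    show _ ⊗ₖ g aᴴ = _ ⊗ₖ (g a)ᴴ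
    calc (1 : Matrix p p ℂ) ⊗ₖ g aᴴ
        = U * (1 ⊗ₖ aᴴ) * star U := (hg _).symm
      _ = U * ((1 : Matrix p p ℂ) ⊗ₖ a)ᴴ * star U := by
          rw [kron_conjT, conjTranspose_one]
      _ = (U * (1 ⊗ₖ a) * star U)ᴴ := by
          simp only [conjTranspose_mul, star_eq_conjTranspose,
            conjTranspose_conjTranspose, mul_assoc]
      _ = ((1 : Matrix p p ℂ) ⊗ₖ g a)ᴴ := by rw [hg]
      _ = (1 : Matrix p p ℂ) ⊗ₖ (g a)ᴴ := by rw [kron_conjT, conjTranspose_one]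
  obtain ⟨W, hWu, hW⟩ := exists_unitary_conj Ψ hgmul hginj hgstar
  -- the conjugation identity for product operators
  set T : Matrix (p × q) (p × q) ℂ := V ⊗ₖ W with hT
  have hstarT : star T = star V ⊗ₖ star W := by
    rw [hT]
    simp only [star_eq_conjTranspose]
    exact kron_conjT V W
  have hTu : star T * T = 1 := by
    rw [hstarT, hT, ← Matrix.mul_kronecker_mul,
      (Matrix.mem_unitaryGroup_iff'.mp hVu), (Matrix.mem_unitaryGroup_iff'.mp hWu),
      Matrix.one_kronecker_one]
  have hTu' : T * star T = 1 := by
    rw [hstarT, hT, ← Matrix.mul_kronecker_mul,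
      (Matrix.mem_unitaryGroup_iff.mp hVu), (Matrix.mem_unitaryGroup_iff.mp hWu),
      Matrix.one_kronecker_one]
  have hconj : ∀ (m : Matrix p p ℂ) (n : Matrix q q ℂ),
      U * (m ⊗ₖ n) * star U = T * (m ⊗ₖ n) * star T := by
    intro m n
    have hsplit : m ⊗ₖ n = (m ⊗ₖ (1 : Matrix q q ℂ)) * ((1 : Matrix p p ℂ) ⊗ₖ n) := by
      rw [← Matrix.mul_kronecker_mul, mul_one, one_mul]
    calc U * (m ⊗ₖ n) * star U
        = U * ((m ⊗ₖ (1 : Matrix q q ℂ)) * ((1 : Matrix p p ℂ) ⊗ₖ n)) * star U := by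
          rw [← hsplit]
      _ = (U * (m ⊗ₖ 1) * star U) * (U * (1 ⊗ₖ n) * star U) := hsand _ _
      _ = (f m ⊗ₖ 1) * (1 ⊗ₖ g n) := by rw [hf, hg]
      _ = f m ⊗ₖ g n := by rw [← Matrix.mul_kronecker_mul, mul_one, one_mul]
      _ = (V * m * star V) ⊗ₖ (W * n * star W) := by
          rw [show f m = Φ m from rfl, show g n = Ψ n from rfl, hV, hW]
      _ = (V ⊗ₖ W) * (m ⊗ₖ n) * (star V ⊗ₖ star W) := by
          rw [← Matrix.mul_kronecker_mul, ← Matrix.mul_kronecker_mul]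
      _ = T * (m ⊗ₖ n) * star T := by rw [← hT, ← hstarT]
  -- star T * U commutes with everything
  set A : Matrix (p × q) (p × q) ℂ := star T * U with hA
  have hAcomm : ∀ (m : Matrix p p ℂ) (n : Matrix q q ℂ),
      A * (m ⊗ₖ n) = (m ⊗ₖ n) * A := by
    intro m n
    have e1 : star T * (U * (m ⊗ₖ n) * star U) * U = A * (m ⊗ₖ n) := by
      rw [hA]
      simp only [← mul_assoc]
      rw [mul_assoc (star T * U * (m ⊗ₖ n)) (star U) U, hUU, mul_one]
    have e2 : star T * (T * (m ⊗ₖ n) * star T) * U = (m ⊗ₖ n) * A := by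
      rw [hA]
      simp only [← mul_assoc]
      rw [hTu, one_mul]
    rw [← e1, hconj m n, e2]
  have hAstd : ∀ (x y : p × q), Commute (Matrix.single x y (1:ℂ)) A := by
    rintro ⟨i, a⟩ ⟨j, b⟩
    have hEE : Matrix.single ((i, a) : p × q) (j, b) (1:ℂ)
        = Matrix.single i j 1 ⊗ₖ Matrix.single a b 1 := by
      ext ⟨x, y⟩ ⟨x', y'⟩
      simp only [Matrix.single, kroneckerMap_apply, Matrix.of_apply, Prod.mk.injEq, ite_and]
      by_cases h1 : i = x <;> by_cases h2 : a = y <;> by_cases h3 : j = x' <;>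
        by_cases h4 : b = y' <;> simp [h1, h2, h3, h4]
    rw [hEE]
    exact (hAcomm _ _).symm
  obtain ⟨r, hr⟩ := Matrix.mem_range_scalar_of_commute_single
    (M := A) (fun x y _ => hAstd x y)
  have hAval : A = r • (1 : Matrix (p × q) (p × q) ℂ) := by
    rw [← hr]
    ext x y
    rcases eq_or_ne x y with rfl | h
    · simp [Matrix.scalar_apply]
    · simp [Matrix.scalar_apply, Matrix.one_apply_ne h, Matrix.diagonal_apply_ne _ h]
  have hUT : U = r • T := by
    have h1 : T * A = U := by rw [hA, ← mul_assoc, hTu', one_mul]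
    rw [← h1, hAval, mul_smul_comm, mul_one]
  -- the norm of r
  have hr1 : star r * r = 1 := by
    have h1 : (1 : Matrix (p × q) (p × q) ℂ)
        = (star r * r) • (1 : Matrix (p × q) (p × q) ℂ) := by
      calc (1 : Matrix (p × q) (p × q) ℂ) = star U * U := hUU.symm
        _ = (star r • star T) * (r • T) := by rw [hUT, star_smul]
        _ = (star r * r) • (star T * T) := by rw [smul_mul_smul_comm]
        _ = (star r * r) • 1 := by rw [hTu]
    obtain ⟨x⟩ : Nonempty (p × q) := ⟨(Classical.arbitrary p, Classical.arbitrary q)⟩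
    have h2 := congrFun (congrFun h1 x) x
    simpa using h2.symm
  have hrnorm : ‖r‖ = 1 := by
    have h2 : (Complex.normSq r : ℂ) = 1 := by
      rw [Complex.normSq_eq_conj_mul_self]
      exact hr1
    have h3 : Complex.normSq r = 1 := by exact_mod_cast h2
    have h4 : ‖r‖ = Real.sqrt (Complex.normSq r) := by
      rw [Complex.norm_def]
    rw [h4, h3, Real.sqrt_one]
  exact ⟨r, V, W, hrnorm, hVu, hWu, hUT⟩
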